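/- Let x = (α,0) and y = (γ,0) be points of ℤ² with α ≤ γ, and let R₁, R₂ ≥ 0 be integers with C_d(x,R₁) ∩ C_d(y,R₂) ≠ ∅. Then card(D_d(x,R₁) ∩ D_d(y,R₂)) = 2r² + 2r + 1, where r = (R₁ + R₂ − (γ − α))/2 (an integer ≥ 0 under the stated hypotheses). -/

import Mathlib

/-- L1 (taxicab) distance on the digital plane ℤ². -/
def dL1 (p q : ℤ × ℤ) : ℤ := |p.1 - q.1| + |p.2 - q.2|

/-- Digital circle with center `x` and radius `r`. -/
def digCircle (x : ℤ × ℤ) (r : ℤ) : Set (ℤ × ℤ) := {z | dL1 x z = r}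

/-- Digital disc with center `x` and radius `R`. -/
def digDisc (x : ℤ × ℤ) (R : ℤ) : Set (ℤ × ℤ) := {z | dL1 x z ≤ R}

lemma sumAbsIcc : ∀ r : ℤ, 0 ≤ r → ∑ a ∈ Finset.Icc (-r) r, |a| = r * (r + 1) := by
  refine Int.le_induction ?_ ?_
  · simp
  · intro n hn ih
    have h1 : Finset.Icc (-(n+1)) (n+1)
        = insert (-(n+1)) (insert (n+1) (Finset.Icc (-n) n)) := by
      ext a
      simp only [Finset.mem_Icc, Finset.mem_insert]
      omega
    rw [h1, Finset.sum_insert (by simp only [Finset.mem_insert, Finset.mem_Icc]; omega),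
        Finset.sum_insert (by simp only [Finset.mem_Icc]; omega), ih]
    have hA : |(-(n+1) : ℤ)| = n + 1 := by
      rw [abs_neg]; exact abs_of_nonneg (by omega)
    rw [hA, abs_of_nonneg (by omega : (0:ℤ) ≤ n + 1)]
    ring

/-- The disc of radius `r` centered at the origin, as a Finset. -/
noncomputable def discFin (r : ℤ) : Finset (ℤ × ℤ) :=
  (Finset.Icc (-r) r ×ˢ Finset.Icc (-r) r).filter (fun p => |p.1| + |p.2| ≤ r)

lemma discFin_eq_biUnion (r : ℤ) : discFin r = (Finset.Icc (-r) r).biUnion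
    (fun a => (Finset.Icc (-(r - |a|)) (r - |a|)).image (fun b => (a, b))) := by
  ext ⟨a, b⟩
  simp only [discFin, Finset.mem_filter, Finset.mem_product, Finset.mem_biUnion,
    Finset.mem_image, Finset.mem_Icc, Prod.mk.injEq]
  constructor
  · rintro ⟨⟨⟨ha1, ha2⟩, _⟩, h⟩
    refine ⟨a, ⟨ha1, ha2⟩, b, ⟨?_, ?_⟩, rfl, rfl⟩
    · have := neg_abs_le b; linarith
    · have := le_abs_self b; linarith
  · rintro ⟨a', ⟨ha1, ha2⟩, b', ⟨hb1, hb2⟩, rfl, rfl⟩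
    have h0 : (0:ℤ) ≤ |a'| := abs_nonneg _
    have h1 := neg_abs_le b'
    have h2 := le_abs_self b'
    have h3 := neg_abs_le a'
    have h4 := le_abs_self a'
    have habs : |b'| ≤ r - |a'| := abs_le.mpr ⟨hb1, hb2⟩
    exact ⟨⟨⟨ha1, ha2⟩, by linarith, by linarith⟩, by linarith⟩

lemma card_discFin (r : ℤ) (hr : 0 ≤ r) :
    ((discFin r).card : ℤ) = 2 * r ^ 2 + 2 * r + 1 := by
  rw [discFin_eq_biUnion, Finset.card_biUnion]
  · have hcast : ∀ a ∈ Finset.Icc (-r) r,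
        ((((Finset.Icc (-(r - |a|)) (r - |a|)).image (fun b => (a, b))).card : ℤ))
          = (2 * r + 1) - 2 * |a| := by
      intro a ha
      rw [Finset.card_image_of_injective _ (fun b c h => by simpa using h)]
      rw [Int.card_Icc]
      have haR : |a| ≤ r := by
        rw [Finset.mem_Icc] at ha; exact abs_le.mpr ha
      rw [Int.toNat_of_nonneg (by omega)]
      ring
    have hcard : (((Finset.Icc (-r) r).card : ℕ) : ℤ) = 2 * r + 1 := by
      rw [Int.card_Icc]; omega
    push_cast
    rw [Finset.sum_congr rfl hcast, Finset.sum_sub_distrib, Finset.sum_const,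
      ← Finset.mul_sum, sumAbsIcc r hr, nsmul_eq_mul, hcard]
    ring
  · intro a _ a' _ hne
    simp only [Function.onFun, Finset.disjoint_left, Finset.mem_image]
    rintro p ⟨b, _, rfl⟩ ⟨b', _, h⟩
    exact hne (by simpa using (Prod.mk.injEq _ _ _ _ ▸ h).1.symm)

theorem digDisc_inter_card (α γ R₁ R₂ : ℤ) (hαγ : α ≤ γ)
    (hR₁ : 0 ≤ R₁) (hR₂ : 0 ≤ R₂)
    (hcap : (digCircle (α, 0) R₁ ∩ digCircle (γ, 0) R₂).Nonempty) :
    ((digDisc (α, 0) R₁ ∩ digDisc (γ, 0) R₂).ncard : ℤ) =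
      2 * ((R₁ + R₂ - (γ - α)) / 2) ^ 2 + 2 * ((R₁ + R₂ - (γ - α)) / 2) + 1 := by
  obtain ⟨z₀, hz1, hz2⟩ := hcap
  simp only [digCircle, dL1, Set.mem_setOf_eq] at hz1 hz2
  have hfacts : (2 ∣ R₁ + R₂ - (γ - α)) ∧ γ - α ≤ R₁ + R₂ ∧
      R₁ - R₂ ≤ γ - α ∧ R₂ - R₁ ≤ γ - α := by
    rcases abs_cases (α - z₀.1) with ⟨e1, _⟩ | ⟨e1, _⟩ <;>
      rcases abs_cases (γ - z₀.1) with ⟨e2, _⟩ | ⟨e2, _⟩ <;>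
      rcases abs_cases ((0:ℤ) - z₀.2) with ⟨e3, _⟩ | ⟨e3, _⟩ <;>
      rw [e1, e3] at hz1 <;> rw [e2, e3] at hz2 <;>
      refine ⟨?_, ?_, ?_, ?_⟩ <;> omega
  obtain ⟨hdvd, hsum, hd1, hd2⟩ := hfacts
  set r : ℤ := (R₁ + R₂ - (γ - α)) / 2 with hrdef
  have hr2 : 2 * r = R₁ + R₂ - (γ - α) := Int.mul_ediv_cancel' hdvd
  have hr0 : 0 ≤ r := by omega
  have hcdvd : 2 ∣ α + γ + R₁ - R₂ := by
    obtain ⟨k, hk⟩ := hdvd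
    exact ⟨k + γ - R₂, by omega⟩
  set c : ℤ := (α + γ + R₁ - R₂) / 2 with hcdef
  have hc2 : 2 * c = α + γ + R₁ - R₂ := Int.mul_ediv_cancel' hcdvd
  have key : ∀ z : ℤ × ℤ, (dL1 (α,0) z ≤ R₁ ∧ dL1 (γ,0) z ≤ R₂) ↔
      |z.1 - c| + |z.2| ≤ r := by
    intro z
    simp only [dL1]
    rcases abs_cases (α - z.1) with ⟨e1, _⟩ | ⟨e1, _⟩ <;>
      rcases abs_cases (γ - z.1) with ⟨e2, _⟩ | ⟨e2, _⟩ <;>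
      rcases abs_cases ((0:ℤ) - z.2) with ⟨e3, _⟩ | ⟨e3, _⟩ <;>
      rcases abs_cases (z.1 - c) with ⟨e4, _⟩ | ⟨e4, _⟩ <;>
      rcases abs_cases (z.2) with ⟨e5, _⟩ | ⟨e5, _⟩ <;>
      rw [e1, e2, e3, e4, e5] <;> omega
  have hset : digDisc (α,0) R₁ ∩ digDisc (γ,0) R₂ =
      ↑((discFin r).image (fun p : ℤ × ℤ => (p.1 + c, p.2))) := by
    ext z
    simp only [digDisc, Set.mem_inter_iff, Set.mem_setOf_eq, Finset.coe_image,
      Set.mem_image, Finset.mem_coe, discFin, Finset.mem_filter,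
      Finset.mem_product, Finset.mem_Icc]
    rw [show (dL1 (α,0) z ≤ R₁ ∧ dL1 (γ,0) z ≤ R₂) ↔ |z.1 - c| + |z.2| ≤ r from key z]
    constructor
    · intro h
      have h1 := neg_abs_le (z.1 - c)
      have h2 := le_abs_self (z.1 - c)
      have h3 := neg_abs_le z.2
      have h4 := le_abs_self z.2
      have h5 := abs_nonneg z.2
      have h6 := abs_nonneg (z.1 - c)
      refine ⟨(z.1 - c, z.2), ⟨⟨⟨?_, ?_⟩, ?_, ?_⟩, h⟩, by simp⟩
      · show -r ≤ z.1 - c; linarith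
      · show z.1 - c ≤ r; linarith
      · show -r ≤ z.2; linarith
      · show z.2 ≤ r; linarith
    · rintro ⟨p, ⟨⟨⟨_, _⟩, _⟩, hp⟩, rfl⟩
      simpa using hp
  rw [hset, Set.ncard_coe_finset,
    Finset.card_image_of_injective _ (fun p q h => by
      have h1 := (Prod.mk.injEq _ _ _ _ ▸ h)
      exact Prod.ext (by omega) h1.2),
    card_discFin r hr0]
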